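/- arXiv:2311.16026 — 3 statements merged into one kernel-verified Lean document; each statement's English description precedes it below -/
import Mathlib

section
/- Suppose U is a random variable taking values u₁, u₂ with P(A=1|U=u) ∈ (0,1) for both values, and define the full propensities p₁ = P(A=1|u₁), p₂ = P(A=1|u₂). If 1/Γ ≤ OR(p₁, p₂) ≤ Γ for all pairs (Rosenbaum's model with parameter Γ ≥ 1), and the marginal propensity π is a convex combination π = λp₁ + (1-λ)p₂ with λ ∈ [0,1], then 1/Γ ≤ OR(π, pᵢ) ≤ Γ for i = 1, 2 (i.e., Rosenbaum's model with parameter Γ implies the MSM with parameter Γ). -/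
noncomputable def OR (a b : ℝ) : ℝ := (a / (1 - a)) * ((1 - b) / b)

lemma OR_self {p : ℝ} (hp : p ∈ Set.Ioo (0:ℝ) 1) : OR p p = 1 := by
  obtain ⟨h0, h1⟩ := hp
  unfold OR
  rw [div_mul_div_comm, mul_comm]
  exact div_self (by nlinarith)

lemma OR_mono {a b p : ℝ} (ha : a ∈ Set.Ioo (0:ℝ) 1) (hb : b ∈ Set.Ioo (0:ℝ) 1)
    (hp : p ∈ Set.Ioo (0:ℝ) 1) (hab : a ≤ b) : OR a p ≤ OR b p := by
  obtain ⟨ha0, ha1⟩ := ha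
  obtain ⟨hb0, hb1⟩ := hb
  obtain ⟨hp0, hp1⟩ := hp
  unfold OR
  have h1 : a / (1 - a) ≤ b / (1 - b) :=
    div_le_div₀ hb0.le hab (by linarith) (by linarith)
  have h2 : 0 ≤ (1 - p) / p := div_nonneg (by linarith) hp0.le
  exact mul_le_mul_of_nonneg_right h1 h2

theorem rosenbaum_implies_msm (p₁ p₂ π Γ l : ℝ)
    (hp₁ : p₁ ∈ Set.Ioo (0:ℝ) 1) (hp₂ : p₂ ∈ Set.Ioo (0:ℝ) 1) (hΓ : 1 ≤ Γ)
    (hRB₁ : 1 / Γ ≤ OR p₁ p₂ ∧ OR p₁ p₂ ≤ Γ)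
    (hRB₂ : 1 / Γ ≤ OR p₂ p₁ ∧ OR p₂ p₁ ≤ Γ)
    (hl : l ∈ Set.Icc (0:ℝ) 1) (hπ : π = l * p₁ + (1 - l) * p₂) :
    (1 / Γ ≤ OR π p₁ ∧ OR π p₁ ≤ Γ) ∧ (1 / Γ ≤ OR π p₂ ∧ OR π p₂ ≤ Γ) := by
  obtain ⟨hl0, hl1⟩ := hl
  have hΓ0 : (0:ℝ) < Γ := lt_of_lt_of_le one_pos hΓ
  have hinv : 1 / Γ ≤ 1 := by
    rw [div_le_one hΓ0]; exact hΓ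
  obtain ⟨hp10, hp11⟩ := hp₁
  obtain ⟨hp20, hp21⟩ := hp₂
  rcases le_total p₁ p₂ with hle | hle
  · have h1π : p₁ ≤ π := by nlinarith
    have hπ2 : π ≤ p₂ := by nlinarith
    have hπmem : π ∈ Set.Ioo (0:ℝ) 1 := ⟨by linarith, by linarith⟩
    have A := OR_mono ⟨hp10, hp11⟩ hπmem ⟨hp10, hp11⟩ h1π
    have B := OR_mono hπmem ⟨hp20, hp21⟩ ⟨hp10, hp11⟩ hπ2
    have C := OR_mono ⟨hp10, hp11⟩ hπmem ⟨hp20, hp21⟩ h1π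
    have D := OR_mono hπmem ⟨hp20, hp21⟩ ⟨hp20, hp21⟩ hπ2
    rw [OR_self ⟨hp10, hp11⟩] at A
    rw [OR_self ⟨hp20, hp21⟩] at D
    exact ⟨⟨le_trans hinv A, le_trans B hRB₂.2⟩, ⟨le_trans hRB₁.1 C, le_trans D hΓ⟩⟩
  · have h2π : p₂ ≤ π := by nlinarith
    have hπ1 : π ≤ p₁ := by nlinarith
    have hπmem : π ∈ Set.Ioo (0:ℝ) 1 := ⟨by linarith, by linarith⟩
    have A := OR_mono hπmem ⟨hp10, hp11⟩ ⟨hp10, hp11⟩ hπ1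
    have B := OR_mono ⟨hp20, hp21⟩ hπmem ⟨hp10, hp11⟩ h2π
    have C := OR_mono hπmem ⟨hp10, hp11⟩ ⟨hp20, hp21⟩ hπ1
    have D := OR_mono ⟨hp20, hp21⟩ hπmem ⟨hp20, hp21⟩ h2π
    rw [OR_self ⟨hp10, hp11⟩] at A
    rw [OR_self ⟨hp20, hp21⟩] at D
    exact ⟨⟨le_trans hRB₂.1 B, le_trans A hΓ⟩, ⟨le_trans hinv D, le_trans C hRB₁.2⟩⟩
end

section
/- Let μ and ν be probability measures on a measurable space Ω with ν absolutely continuous w.r.t. μ, and suppose there exists Γ ≥ 1 such that 1/Γ ≤ dν/dμ ≤ Γ μ-a.e. Then for any measurable map t : Ω → Ω', the pushforward measures satisfy 1/Γ ≤ d(t_*ν)/d(t_*μ) ≤ Γ t_*μ-a.e. -/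
open MeasureTheory ENNReal

theorem rnDeriv_bounds_map {Ω Ω' : Type*} [MeasurableSpace Ω] [MeasurableSpace Ω']
    (μ ν : Measure Ω) [IsProbabilityMeasure μ] [IsProbabilityMeasure ν]
    (hac : ν ≪ μ) (Γ : ℝ≥0∞) (hΓ : 1 ≤ Γ)
    (hbound : ∀ᵐ ω ∂μ, Γ⁻¹ ≤ ν.rnDeriv μ ω ∧ ν.rnDeriv μ ω ≤ Γ)
    (t : Ω → Ω') (ht : Measurable t) :
    ∀ᵐ ω' ∂(μ.map t),
      Γ⁻¹ ≤ (ν.map t).rnDeriv (μ.map t) ω' ∧ (ν.map t).rnDeriv (μ.map t) ω' ≤ Γ := by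
  have hac' : ν.map t ≪ μ.map t := hac.map ht
  -- set bounds on Ω
  have hup : ∀ s : Set Ω, MeasurableSet s → ν s ≤ Γ * μ s := by
    intro s hs
    rw [← Measure.setLIntegral_rnDeriv hac s]
    calc ∫⁻ x in s, ν.rnDeriv μ x ∂μ ≤ ∫⁻ _ in s, Γ ∂μ :=
          setLIntegral_mono_ae aemeasurable_const (hbound.mono fun x hx _ ↦ hx.2)
      _ = Γ * μ s := by rw [setLIntegral_const]
  have hlo : ∀ s : Set Ω, MeasurableSet s → Γ⁻¹ * μ s ≤ ν s := by
    intro s hs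
    rw [← Measure.setLIntegral_rnDeriv hac s, ← setLIntegral_const]
    exact setLIntegral_mono_ae (ν.measurable_rnDeriv μ).aemeasurable (hbound.mono fun x hx _ ↦ hx.1)
  have h1 : (ν.map t).rnDeriv (μ.map t) ≤ᵐ[μ.map t] fun _ ↦ Γ := by
    refine ae_le_of_forall_setLIntegral_le_of_sigmaFinite
      ((ν.map t).measurable_rnDeriv (μ.map t)) fun s hs _ ↦ ?_
    rw [Measure.setLIntegral_rnDeriv hac' s, setLIntegral_const,
      Measure.map_apply ht hs, Measure.map_apply ht hs]
    exact hup _ (ht hs)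
  have h2 : (fun _ ↦ Γ⁻¹) ≤ᵐ[μ.map t] (ν.map t).rnDeriv (μ.map t) := by
    refine ae_le_of_forall_setLIntegral_le_of_sigmaFinite measurable_const fun s hs _ ↦ ?_
    rw [Measure.setLIntegral_rnDeriv hac' s, setLIntegral_const,
      Measure.map_apply ht hs, Measure.map_apply ht hs]
    exact hlo _ (ht hs)
  filter_upwards [h1, h2] with x hx1 hx2
  exact ⟨hx2, hx1⟩
end

section
/- Let π ∈ (0,1), Γ ≥ 1, and p ∈ (0,1) with 1/Γ ≤ OR(π,p) ≤ Γ. Define s⁺ = 1/((1-Γ⁻¹)π + Γ⁻¹) and s⁻ = 1/((1-Γ)π + Γ). Then p/π ∈ [s⁻, s⁻ ∨ s⁺] with s⁻ ≤ 1 ≤ s⁺, i.e., the density ratio p/π is bounded between s⁻ and s⁺. -/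
theorem density_ratio_bounds (π p Γ : ℝ) (hπ : π ∈ Set.Ioo (0:ℝ) 1)
    (hp : p ∈ Set.Ioo (0:ℝ) 1) (hΓ : 1 ≤ Γ)
    (hmsm : 1 / Γ ≤ OR π p ∧ OR π p ≤ Γ) :
    (1 / ((1 - Γ) * π + Γ) ≤ p / π ∧
      p / π ≤ max (1 / ((1 - Γ) * π + Γ)) (1 / ((1 - Γ⁻¹) * π + Γ⁻¹))) ∧
    1 / ((1 - Γ) * π + Γ) ≤ 1 ∧ 1 ≤ 1 / ((1 - Γ⁻¹) * π + Γ⁻¹) := by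
  obtain ⟨hπ0, hπ1⟩ := hπ
  obtain ⟨hp0, hp1⟩ := hp
  have hΓ0 : (0:ℝ) < Γ := lt_of_lt_of_le one_pos hΓ
  have hΓi0 : (0:ℝ) < Γ⁻¹ := inv_pos.mpr hΓ0
  have hΓi1 : Γ⁻¹ ≤ 1 := inv_le_one_of_one_le₀ hΓ
  have hΓΓi : Γ * Γ⁻¹ = 1 := mul_inv_cancel₀ (ne_of_gt hΓ0)
  have hd1 : (0:ℝ) < (1 - Γ) * π + Γ := by nlinarith
  have hd2 : (0:ℝ) < (1 - Γ⁻¹) * π + Γ⁻¹ := by nlinarith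
  have hden : (0:ℝ) < (1 - π) * p := by nlinarith
  have h1 : π * (1 - p) ≤ Γ * ((1 - π) * p) := by
    have h := hmsm.2
    unfold OR at h
    rw [div_mul_div_comm, div_le_iff₀ hden] at h
    linarith
  have h2 : (1 / Γ) * ((1 - π) * p) ≤ π * (1 - p) := by
    have h := hmsm.1
    unfold OR at h
    rw [div_mul_div_comm, le_div_iff₀ hden] at h
    linarith
  have h2' : p * (1 - π) ≤ Γ * (π * (1 - p)) := by
    have := mul_le_mul_of_nonneg_left h2 (le_of_lt hΓ0)
    calc p * (1 - π) = Γ * ((1 / Γ) * ((1 - π) * p)) := by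
          field_simp
      _ ≤ Γ * (π * (1 - p)) := this
  have hlow : 1 / ((1 - Γ) * π + Γ) ≤ p / π := by
    rw [div_le_div_iff₀ hd1 hπ0]
    nlinarith
  have hup : p / π ≤ 1 / ((1 - Γ⁻¹) * π + Γ⁻¹) := by
    rw [div_le_div_iff₀ hπ0 hd2]
    have key : p * ((1 - Γ⁻¹) * π + Γ⁻¹) * Γ ≤ π * Γ := by nlinarith
    nlinarith
  refine ⟨⟨hlow, le_trans hup (le_max_right _ _)⟩, ?_, ?_⟩
  · rw [div_le_one hd1]; nlinarith
  · rw [le_one_div one_pos hd2]  -- maybe wrong lemma; fallback below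
    nlinarith
end
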